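/- Let K ≥ 3 and μ ≥ 1 be integers. Suppose B_E : ℤ → ℤ satisfies: B_E(n)=0 for all n ≤ 0; B_E(1)=1, B_E(2)=2, B_E(3)=3; B_E(4),...,B_E(K) are arbitrary integers; B_E(K+1)=K+μ, B_E(K+2)=3, B_E(K+3)=K+3, B_E(K+4)=K+μ+1, B_E(K+5)=5; and B_E(n) = B_E(n−B_E(n−1)) + B_E(n−B_E(n−2)) + B_E(n−B_E(n−3)) for all n with K+5 < n ≤ K+⌊(5μ−15)/2⌋. Then for every integer k ≥ 0 and every r ∈ {0,1,2,3,4} with K+1 ≤ K+5k+r ≤ K+⌊(5μ−15)/2⌋: B_E(K+5k)=5, B_E(K+5k+1)=K+3k+μ, B_E(K+5k+2)=3, B_E(K+5k+3)=K+5k+3, and B_E(K+5k+4)=K+3k+μ+1. -/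

import Mathlib

theorem lemma_5cyc (K mu : ℤ) (hK : 3 ≤ K) (hmu : 1 ≤ mu)
    (f : ℤ → ℤ)
    (h0 : ∀ n : ℤ, n ≤ 0 → f n = 0)
    (h1 : f 1 = 1) (h2 : f 2 = 2) (h3 : f 3 = 3)
    (hK1 : f (K + 1) = K + mu) (hK2 : f (K + 2) = 3) (hK3 : f (K + 3) = K + 3)
    (hK4 : f (K + 4) = K + mu + 1) (hK5 : f (K + 5) = 5)
    (hrec : ∀ n : ℤ, K + 5 < n → n ≤ K + (5 * mu - 15) / 2 →
      f n = f (n - f (n - 1)) + f (n - f (n - 2)) + f (n - f (n - 3))) :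
    ∀ k : ℤ, 0 ≤ k →
      ((K + 1 ≤ K + 5 * k ∧ K + 5 * k ≤ K + (5 * mu - 15) / 2) → f (K + 5 * k) = 5) ∧
      ((K + 1 ≤ K + 5 * k + 1 ∧ K + 5 * k + 1 ≤ K + (5 * mu - 15) / 2) → f (K + 5 * k + 1) = K + 3 * k + mu) ∧
      ((K + 1 ≤ K + 5 * k + 2 ∧ K + 5 * k + 2 ≤ K + (5 * mu - 15) / 2) → f (K + 5 * k + 2) = 3) ∧
      ((K + 1 ≤ K + 5 * k + 3 ∧ K + 5 * k + 3 ≤ K + (5 * mu - 15) / 2) → f (K + 5 * k + 3) = K + 5 * k + 3) ∧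
      ((K + 1 ≤ K + 5 * k + 4 ∧ K + 5 * k + 4 ≤ K + (5 * mu - 15) / 2) → f (K + 5 * k + 4) = K + 3 * k + mu + 1) := by
  intro k hk
  refine Int.le_induction (motive := fun k _ =>
      ((K + 1 ≤ K + 5 * k ∧ K + 5 * k ≤ K + (5 * mu - 15) / 2) → f (K + 5 * k) = 5) ∧
      ((K + 1 ≤ K + 5 * k + 1 ∧ K + 5 * k + 1 ≤ K + (5 * mu - 15) / 2) → f (K + 5 * k + 1) = K + 3 * k + mu) ∧
      ((K + 1 ≤ K + 5 * k + 2 ∧ K + 5 * k + 2 ≤ K + (5 * mu - 15) / 2) → f (K + 5 * k + 2) = 3) ∧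
      ((K + 1 ≤ K + 5 * k + 3 ∧ K + 5 * k + 3 ≤ K + (5 * mu - 15) / 2) → f (K + 5 * k + 3) = K + 5 * k + 3) ∧
      ((K + 1 ≤ K + 5 * k + 4 ∧ K + 5 * k + 4 ≤ K + (5 * mu - 15) / 2) → f (K + 5 * k + 4) = K + 3 * k + mu + 1))
    ?_ ?_ k hk
  · -- base
    refine ⟨?_, ?_, ?_, ?_, ?_⟩
    · rintro ⟨h, -⟩; omega
    · rintro -
      rw [show K + 5 * (0:ℤ) + 1 = K + 1 from by ring, hK1]; all_goals omega
    · rintro -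
      rw [show K + 5 * (0:ℤ) + 2 = K + 2 from by ring, hK2]
    · rintro -
      rw [show K + 5 * (0:ℤ) + 3 = K + 3 from by ring, hK3]; all_goals omega
    · rintro -
      rw [show K + 5 * (0:ℤ) + 4 = K + 4 from by ring, hK4]; all_goals omega
  · intro k hk IH
    obtain ⟨ih0, ih1, ih2, ih3, ih4⟩ := IH
    have h5 : K + 5 * k + 5 ≤ K + (5 * mu - 15) / 2 → f (K + 5 * k + 5) = 5 := by
      intro hb
      rcases eq_or_lt_of_le hk with h | h
      · rw [show K + 5 * k + 5 = K + 5 from by omega, hK5]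
      · have hn := hrec (K + 5 * k + 5) (by omega) (by omega)
        rw [show K + 5 * k + 5 - 1 = K + 5 * k + 4 from by ring,
            show K + 5 * k + 5 - 2 = K + 5 * k + 3 from by ring,
            show K + 5 * k + 5 - 3 = K + 5 * k + 2 from by ring,
            ih4 ⟨by omega, by omega⟩, ih3 ⟨by omega, by omega⟩,
            ih2 ⟨by omega, by omega⟩,
            show K + 5 * k + 5 - (K + 3 * k + mu + 1) = 2 * k + 4 - mu from by ring,
            show K + 5 * k + 5 - (K + 5 * k + 3) = 2 from by ring,
            show K + 5 * k + 5 - 3 = K + 5 * k + 2 from by ring,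
            h0 (2 * k + 4 - mu) (by omega), h2, ih2 ⟨by omega, by omega⟩] at hn
        rw [hn]; all_goals omega
    have h6 : K + 5 * k + 6 ≤ K + (5 * mu - 15) / 2 → f (K + 5 * k + 6) = K + 3 * k + mu + 3 := by
      intro hb
      have hn := hrec (K + 5 * k + 6) (by omega) (by omega)
      rw [show K + 5 * k + 6 - 1 = K + 5 * k + 5 from by ring,
          show K + 5 * k + 6 - 2 = K + 5 * k + 4 from by ring,
          show K + 5 * k + 6 - 3 = K + 5 * k + 3 from by ring,
          h5 (by omega), ih4 ⟨by omega, by omega⟩, ih3 ⟨by omega, by omega⟩,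
          show K + 5 * k + 6 - 5 = K + 5 * k + 1 from by ring,
          show K + 5 * k + 6 - (K + 3 * k + mu + 1) = 2 * k + 5 - mu from by ring,
          show K + 5 * k + 6 - (K + 5 * k + 3) = 3 from by ring,
          ih1 ⟨by omega, by omega⟩, h0 (2 * k + 5 - mu) (by omega), h3] at hn
      rw [hn]; all_goals omega
    have h7 : K + 5 * k + 7 ≤ K + (5 * mu - 15) / 2 → f (K + 5 * k + 7) = 3 := by
      intro hb
      have hn := hrec (K + 5 * k + 7) (by omega) (by omega)
      rw [show K + 5 * k + 7 - 1 = K + 5 * k + 6 from by ring,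
          show K + 5 * k + 7 - 2 = K + 5 * k + 5 from by ring,
          show K + 5 * k + 7 - 3 = K + 5 * k + 4 from by ring,
          h6 (by omega), h5 (by omega), ih4 ⟨by omega, by omega⟩,
          show K + 5 * k + 7 - (K + 3 * k + mu + 3) = 2 * k + 4 - mu from by ring,
          show K + 5 * k + 7 - 5 = K + 5 * k + 2 from by ring,
          show K + 5 * k + 7 - (K + 3 * k + mu + 1) = 2 * k + 6 - mu from by ring,
          h0 (2 * k + 4 - mu) (by omega), ih2 ⟨by omega, by omega⟩,
          h0 (2 * k + 6 - mu) (by omega)] at hn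
      rw [hn]; all_goals omega
    have h8 : K + 5 * k + 8 ≤ K + (5 * mu - 15) / 2 → f (K + 5 * k + 8) = K + 5 * k + 8 := by
      intro hb
      have hn := hrec (K + 5 * k + 8) (by omega) (by omega)
      rw [show K + 5 * k + 8 - 1 = K + 5 * k + 7 from by ring,
          show K + 5 * k + 8 - 2 = K + 5 * k + 6 from by ring,
          show K + 5 * k + 8 - 3 = K + 5 * k + 5 from by ring,
          h7 (by omega), h6 (by omega), h5 (by omega),
          show K + 5 * k + 8 - 3 = K + 5 * k + 5 from by ring,
          show K + 5 * k + 8 - (K + 3 * k + mu + 3) = 2 * k + 5 - mu from by ring,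
          show K + 5 * k + 8 - 5 = K + 5 * k + 3 from by ring,
          h5 (by omega), h0 (2 * k + 5 - mu) (by omega),
          ih3 ⟨by omega, by omega⟩] at hn
      rw [hn]; all_goals omega
    have h9 : K + 5 * k + 9 ≤ K + (5 * mu - 15) / 2 → f (K + 5 * k + 9) = K + 3 * k + mu + 4 := by
      intro hb
      have hn := hrec (K + 5 * k + 9) (by omega) (by omega)
      rw [show K + 5 * k + 9 - 1 = K + 5 * k + 8 from by ring,
          show K + 5 * k + 9 - 2 = K + 5 * k + 7 from by ring,
          show K + 5 * k + 9 - 3 = K + 5 * k + 6 from by ring,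
          h8 (by omega), h7 (by omega), h6 (by omega),
          show K + 5 * k + 9 - (K + 5 * k + 8) = 1 from by ring,
          show K + 5 * k + 9 - 3 = K + 5 * k + 6 from by ring,
          show K + 5 * k + 9 - (K + 3 * k + mu + 3) = 2 * k + 6 - mu from by ring,
          h1, h6 (by omega), h0 (2 * k + 6 - mu) (by omega)] at hn
      rw [hn]; all_goals omega
    refine ⟨?_, ?_, ?_, ?_, ?_⟩
    · rintro ⟨-, hb⟩
      rw [show K + 5 * (k + 1) = K + 5 * k + 5 from by ring]
      exact h5 (by omega)
    · rintro ⟨-, hb⟩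
      rw [show K + 5 * (k + 1) + 1 = K + 5 * k + 6 from by ring, h6 (by omega)]; all_goals omega
    · rintro ⟨-, hb⟩
      rw [show K + 5 * (k + 1) + 2 = K + 5 * k + 7 from by ring]
      exact h7 (by omega)
    · rintro ⟨-, hb⟩
      rw [show K + 5 * (k + 1) + 3 = K + 5 * k + 8 from by ring, h8 (by omega)]; all_goals omega
    · rintro ⟨-, hb⟩
      rw [show K + 5 * (k + 1) + 4 = K + 5 * k + 9 from by ring, h9 (by omega)]; all_goals omega
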